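/- Let μ be the product Bernoulli measure on σ : {1,2,3,4,5} → Bool with parameters 0.1, 0.2, 0.3, 0.2, 0.4. Define F σ = (if σ 1 then σ 2 else σ 3, if ¬σ 1 then σ 4 else σ 5). Let μ' be the product measure on σ : {1,2,3,5} → Bool with parameters 0.1, 0.2, 0.3, 0.4 and define F' σ = (if σ 1 then σ 2 else σ 3, if ¬σ 1 then σ 2 else σ 5). Then the pushforwards of F and F' coincide as distributions on Bool × Bool. -/

import Mathlib

open MeasureTheory
open scoped ENNReal

/-- The `ℝ≥0∞`-parameter Bernoulli `PMF` of the older Mathlib (`PMF.bernoulli` now takes `ℝ≥0`). -/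
noncomputable def PMF.bernoulliENNReal (p : ℝ≥0∞) (h : p ≤ 1) : PMF Bool :=
  PMF.ofFintype (fun b => cond b p (1 - p)) (by simp [add_tsub_cancel_of_le h])

/-- Parameters `0.1, 0.2, 0.3, 0.2, 0.4` of the five flips of the original program. -/
noncomputable def v11 : Fin 5 → ℝ≥0∞ := fun i =>
  ENNReal.ofReal
    (if (i : ℕ) = 0 then 0.1 else if (i : ℕ) = 1 then 0.2 else
      if (i : ℕ) = 2 then 0.3 else if (i : ℕ) = 3 then 0.2 else 0.4)

lemma v11_le (i : Fin 5) : v11 i ≤ 1 := by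
  unfold v11; exact ENNReal.ofReal_le_one.mpr (by split_ifs <;> norm_num)

/-- Parameters `0.1, 0.2, 0.3, 0.4` of the four flips `{1, 2, 3, 5}` of the
globally hoisted program. -/
noncomputable def v11' : Fin 4 → ℝ≥0∞ := fun i =>
  ENNReal.ofReal
    (if (i : ℕ) = 0 then 0.1 else if (i : ℕ) = 1 then 0.2 else
      if (i : ℕ) = 2 then 0.3 else 0.4)

lemma v11'_le (i : Fin 4) : v11' i ≤ 1 := by
  unfold v11'; exact ENNReal.ofReal_le_one.mpr (by split_ifs <;> norm_num)


lemma meas_finset {α : Type*} [MeasurableSpace α] [MeasurableSingletonClass α]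
    (μ : Measure α) [DecidableEq α] (s : Finset α) : μ ↑s = ∑ x ∈ s, μ {x} := by
  have : (↑s : Set α) = ⋃ x ∈ s, {x} := by ext y; simp
  rw [this, measure_biUnion_finset]
  · intro x _ y _ hxy; simp [Set.disjoint_singleton, hxy]
  · intro b _; exact measurableSet_singleton b

lemma map_singleton {n : ℕ} (v : Fin n → ℝ≥0∞) (hv : ∀ i, v i ≤ 1)
    (f : (Fin n → Bool) → Bool × Bool) (x : Bool × Bool) :
    ((Measure.pi fun i => (PMF.bernoulliENNReal (v i) (hv i)).toMeasure).map f) {x}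
      = ∑ σ ∈ Finset.univ.filter (fun σ => f σ = x),
          ∏ i, (cond (σ i) (v i) (1 - v i)) := by
  rw [Measure.map_apply (measurable_of_finite f) (measurableSet_singleton x)]
  have h1 : f ⁻¹' {x} = ↑(Finset.univ.filter (fun σ => f σ = x)) := by ext; simp
  rw [h1, meas_finset]
  refine Finset.sum_congr rfl fun σ _ => ?_
  have h2 : ({σ} : Set (Fin n → Bool)) = Set.pi Set.univ fun i => {σ i} := by
    ext τ; simp [funext_iff]
  rw [h2, Measure.pi_pi]
  refine Finset.prod_congr rfl fun i _ => ?_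
  rw [PMF.toMeasure_apply_singleton _ _ (measurableSet_singleton _), PMF.bernoulliENNReal, PMF.ofFintype_apply]

lemma sum_bool_succ {M : Type*} [AddCommMonoid M] {n : ℕ} (g : (Fin (n+1) → Bool) → M) :
    ∑ σ : Fin (n+1) → Bool, g σ
      = ∑ τ : Fin n → Bool, (g (Matrix.vecCons true τ) + g (Matrix.vecCons false τ)) := by
  rw [← (Fin.consEquiv fun _ => Bool).sum_comp g, Fintype.sum_prod_type_right]
  exact Finset.sum_congr rfl fun τ _ => Fintype.sum_bool _

lemma sum_bool_zero {M : Type*} [AddCommMonoid M] (g : (Fin 0 → Bool) → M) :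
    ∑ σ : Fin 0 → Bool, g σ = g ![] := by
  rw [Fintype.sum_unique]
  exact congrArg g (Subsingleton.elim _ _)

def r11 : Fin 5 → ℝ := fun i =>
  (if (i : ℕ) = 0 then 0.1 else if (i : ℕ) = 1 then 0.2 else
      if (i : ℕ) = 2 then 0.3 else if (i : ℕ) = 3 then 0.2 else 0.4)

def r11' : Fin 4 → ℝ := fun i =>
  (if (i : ℕ) = 0 then 0.1 else if (i : ℕ) = 1 then 0.2 else
      if (i : ℕ) = 2 then 0.3 else 0.4)

lemma r11_0 : r11 0 = 0.1 := by norm_num [r11]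
lemma r11_1 : r11 1 = 0.2 := by norm_num [r11]
lemma r11_2 : r11 2 = 0.3 := by norm_num [r11]
lemma r11_3 : r11 3 = 0.2 := by norm_num [r11, show ((3:Fin 5):ℕ) = 3 from rfl]
lemma r11_4 : r11 4 = 0.4 := by norm_num [r11, show ((4:Fin 5):ℕ) = 4 from rfl]
lemma r11'_0 : r11' 0 = 0.1 := by norm_num [r11']
lemma r11'_1 : r11' 1 = 0.2 := by norm_num [r11']
lemma r11'_2 : r11' 2 = 0.3 := by norm_num [r11']
lemma r11'_3 : r11' 3 = 0.4 := by norm_num [r11', show ((3:Fin 4):ℕ) = 3 from rfl]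

lemma r11_mem (i : Fin 5) : 0 ≤ r11 i ∧ r11 i ≤ 1 := by
  unfold r11; split_ifs <;> norm_num

lemma r11'_mem (i : Fin 4) : 0 ≤ r11' i ∧ r11' i ≤ 1 := by
  unfold r11'; split_ifs <;> norm_num

lemma wgt {c : ℝ} (h0 : 0 ≤ c) (b : Bool) :
    cond b (ENNReal.ofReal c) (1 - ENNReal.ofReal c) = ENNReal.ofReal (cond b c (1 - c)) := by
  cases b
  · rw [Bool.cond_false, Bool.cond_false, ← ENNReal.ofReal_one, ← ENNReal.ofReal_sub _ h0]
  · rfl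

lemma wgt_nonneg {c : ℝ} (h0 : 0 ≤ c) (h1 : c ≤ 1) (b : Bool) : 0 ≤ cond b c (1 - c) := by
  cases b
  · simpa using h1
  · exact h0

lemma cval3 {α : Type*} {m : ℕ} (x : α) (u : Fin (m+3) → α) :
    Matrix.vecCons x u 3 = Matrix.vecHead (Matrix.vecTail (Matrix.vecTail u)) := rfl

lemma cval4 {α : Type*} {m : ℕ} (x : α) (u : Fin (m+4) → α) :
    Matrix.vecCons x u 4 = Matrix.vecHead (Matrix.vecTail (Matrix.vecTail (Matrix.vecTail u))) := rfl

set_option maxHeartbeats 2000000 in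
/-- the global-hoisting example.  With
`F σ = (if σ₁ then σ₂ else σ₃, if ¬σ₁ then σ₄ else σ₅)` on flips 1–5 with
parameters `0.1, 0.2, 0.3, 0.2, 0.4`, and the hoisted
`F' σ = (if σ₁ then σ₂ else σ₃, if ¬σ₁ then σ₂ else σ₅)` on flips `{1, 2, 3, 5}`
with parameters `0.1, 0.2, 0.3, 0.4`, the pushforwards coincide on `Bool × Bool`. -/
theorem stmt_11 :
    (Measure.pi fun i => (PMF.bernoulliENNReal (v11 i) (v11_le i)).toMeasure).map
      (fun σ : Fin 5 → Bool =>
        ((if σ 0 then σ 1 else σ 2), (if !σ 0 then σ 3 else σ 4))) =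
    (Measure.pi fun i => (PMF.bernoulliENNReal (v11' i) (v11'_le i)).toMeasure).map
      (fun σ : Fin 4 → Bool =>
        ((if σ 0 then σ 1 else σ 2), (if !σ 0 then σ 1 else σ 3))) := by
  refine Measure.ext_of_singleton fun x => ?_
  rw [map_singleton, map_singleton, Finset.sum_filter, Finset.sum_filter]
  have e1 : ∀ σ : Fin 5 → Bool,
      (∏ i, cond (σ i) (v11 i) (1 - v11 i))
        = ENNReal.ofReal (∏ i, cond (σ i) (r11 i) (1 - r11 i)) := by
    intro σ
    rw [ENNReal.ofReal_prod_of_nonneg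
      (fun i _ => wgt_nonneg (r11_mem i).1 (r11_mem i).2 (σ i))]
    exact Finset.prod_congr rfl fun i _ => wgt (r11_mem i).1 (σ i)
  have e2 : ∀ σ : Fin 4 → Bool,
      (∏ i, cond (σ i) (v11' i) (1 - v11' i))
        = ENNReal.ofReal (∏ i, cond (σ i) (r11' i) (1 - r11' i)) := by
    intro σ
    rw [ENNReal.ofReal_prod_of_nonneg
      (fun i _ => wgt_nonneg (r11'_mem i).1 (r11'_mem i).2 (σ i))]
    exact Finset.prod_congr rfl fun i _ => wgt (r11'_mem i).1 (σ i)
  simp only [e1, e2]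
  have key : ∀ {m : ℕ} (r : Fin m → ℝ) (hr : ∀ i, 0 ≤ r i ∧ r i ≤ 1)
      (f : (Fin m → Bool) → Bool × Bool),
      (∑ σ : Fin m → Bool, if f σ = x then
          ENNReal.ofReal (∏ i, cond (σ i) (r i) (1 - r i)) else 0)
        = ENNReal.ofReal (∑ σ : Fin m → Bool, if f σ = x then
            (∏ i, cond (σ i) (r i) (1 - r i)) else 0) := by
    intro m r hr f
    rw [ENNReal.ofReal_sum_of_nonneg]
    · refine Finset.sum_congr rfl fun σ _ => ?_
      rw [apply_ite ENNReal.ofReal, ENNReal.ofReal_zero]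
    · intro σ _
      split_ifs
      · exact Finset.prod_nonneg fun i _ => wgt_nonneg (hr i).1 (hr i).2 (σ i)
      · exact le_rfl
  rw [key r11 r11_mem _, key r11' r11'_mem _]
  congr 1
  obtain ⟨a, b⟩ := x
  simp only [sum_bool_succ, sum_bool_zero, Fin.prod_univ_five, Fin.prod_univ_four,
    Matrix.cons_val_zero, Matrix.cons_val_one, Matrix.cons_val_two, cval3, cval4,
    Matrix.head_cons, Matrix.tail_cons, Matrix.vecHead, Matrix.vecTail,
    Function.comp_apply, Bool.cond_true, Bool.cond_false]
  cases a <;> cases b <;> norm_num [Matrix.cons_val_two, r11_0, r11_1, r11_2, r11_3, r11_4, r11'_0, r11'_1, r11'_2, r11'_3]
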